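/- Let A be an n×n real matrix, C an m×n real matrix, Q a symmetric positive semidefinite n×n real matrix, and let W₁, W₂ be symmetric positive definite m×m real matrices with W₁ ≤ W₂ in the Loewner order. Define g_W(X) = A X Aᵀ + Q − A X Cᵀ(C X Cᵀ + W)⁻¹ C X Aᵀ. Then for every symmetric positive semidefinite n×n matrix X, g_{W₁}(X) ≤ g_{W₂}(X). -/

import Mathlib

open Matrix

/-- Antitonicity of inverse in the Loewner order. -/
lemma inv_sub_inv_posSemidef {m : ℕ} {S₁ S₂ : Matrix (Fin m) (Fin m) ℝ}
    (h₁ : S₁.PosDef) (h₂ : S₂.PosDef) (hD : (S₂ - S₁).PosSemidef) :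
    (S₁⁻¹ - S₂⁻¹).PosSemidef := by
  set D := S₂ - S₁ with hDdef
  have hu₁ : IsUnit S₁.det := isUnit_iff_ne_zero.mpr (ne_of_gt h₁.det_pos)
  have hu₂ : IsUnit S₂.det := isUnit_iff_ne_zero.mpr (ne_of_gt h₂.det_pos)
  have h11 : S₁ * S₁⁻¹ = 1 := mul_nonsing_inv _ hu₁
  have h11' : S₁⁻¹ * S₁ = 1 := nonsing_inv_mul _ hu₁
  have h22 : S₂ * S₂⁻¹ = 1 := mul_nonsing_inv _ hu₂
  have h22' : S₂⁻¹ * S₂ = 1 := nonsing_inv_mul _ hu₂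
  have key : S₁⁻¹ - S₂⁻¹ = S₂⁻¹ * D * S₂⁻¹ + S₂⁻¹ * (D * S₁⁻¹ * D) * S₂⁻¹ := by
    have e1 : S₂⁻¹ * D * S₁⁻¹ = S₁⁻¹ - S₂⁻¹ := by
      rw [hDdef, Matrix.mul_sub, Matrix.sub_mul, h22', Matrix.mul_assoc, h11, Matrix.mul_one,
        one_mul]
    have e1' : S₁⁻¹ * D * S₂⁻¹ = S₁⁻¹ - S₂⁻¹ := by
      rw [hDdef, Matrix.mul_sub, Matrix.sub_mul, Matrix.mul_assoc, h22, Matrix.mul_one, h11',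
        one_mul]
    have e2' : S₁⁻¹ = S₂⁻¹ + S₁⁻¹ * D * S₂⁻¹ := by rw [e1']; abel
    calc S₁⁻¹ - S₂⁻¹ = S₂⁻¹ * D * S₁⁻¹ := e1.symm
      _ = S₂⁻¹ * D * (S₂⁻¹ + S₁⁻¹ * D * S₂⁻¹) := by rw [← e2']
      _ = S₂⁻¹ * D * S₂⁻¹ + S₂⁻¹ * (D * S₁⁻¹ * D) * S₂⁻¹ := by
          rw [Matrix.mul_add]; congr 1; noncomm_ring
  rw [key]
  have hDh : Dᴴ = D := hD.isHermitian
  have hS2ih : (S₂⁻¹)ᴴ = S₂⁻¹ := h₂.inv.isHermitian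
  have p1 : (S₂⁻¹ * D * S₂⁻¹).PosSemidef := by
    have := hD.mul_mul_conjTranspose_same S₂⁻¹
    rwa [hS2ih] at this
  have p2 : (S₂⁻¹ * (D * S₁⁻¹ * D) * S₂⁻¹).PosSemidef := by
    have hin : (D * S₁⁻¹ * D).PosSemidef := by
      have := h₁.inv.posSemidef.conjTranspose_mul_mul_same D
      rwa [hDh] at this
    have := hin.mul_mul_conjTranspose_same S₂⁻¹
    rwa [hS2ih] at this
  exact p1.add p2

/-- The Riccati-type map `g_W(X) = A X Aᵀ + Q − A X Cᵀ(C X Cᵀ + W)⁻¹ C X Aᵀ`. -/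
noncomputable def gmap {n m : ℕ} (A : Matrix (Fin n) (Fin n) ℝ)
    (C : Matrix (Fin m) (Fin n) ℝ) (Q : Matrix (Fin n) (Fin n) ℝ)
    (W : Matrix (Fin m) (Fin m) ℝ) (X : Matrix (Fin n) (Fin n) ℝ) :
    Matrix (Fin n) (Fin n) ℝ :=
  A * X * Aᵀ + Q - A * X * Cᵀ * (C * X * Cᵀ + W)⁻¹ * C * X * Aᵀ

/-- Monotonicity of `g_W` in the noise covariance: if `W₁ ≤ W₂` (Loewner order,
both positive definite), then `g_{W₁}(X) ≤ g_{W₂}(X)` for every positive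
semidefinite `X`, where `Q` is positive semidefinite. -/
theorem stmt_5 {n m : ℕ} (A : Matrix (Fin n) (Fin n) ℝ)
    (C : Matrix (Fin m) (Fin n) ℝ) (Q : Matrix (Fin n) (Fin n) ℝ)
    (W₁ W₂ : Matrix (Fin m) (Fin m) ℝ)
    (hQ : Q.PosSemidef) (hW₁ : W₁.PosDef) (hW₂ : W₂.PosDef)
    (hW : (W₂ - W₁).PosSemidef)
    (X : Matrix (Fin n) (Fin n) ℝ) (hX : X.PosSemidef) :
    (gmap A C Q W₂ X - gmap A C Q W₁ X).PosSemidef := by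
  have hCXC : (C * X * Cᵀ).PosSemidef := by
    have := hX.mul_mul_conjTranspose_same C
    simpa using this
  have hS₁ : (C * X * Cᵀ + W₁).PosDef := Matrix.PosDef.posSemidef_add hCXC hW₁
  have hS₂ : (C * X * Cᵀ + W₂).PosDef := Matrix.PosDef.posSemidef_add hCXC hW₂
  have hD : ((C * X * Cᵀ + W₂) - (C * X * Cᵀ + W₁)).PosSemidef := by
    simpa using hW
  have hinv := inv_sub_inv_posSemidef hS₁ hS₂ hD
  have hXt : Xᵀ = X := by
    have := hX.1.eq
    rwa [Matrix.conjTranspose_eq_transpose_of_trivial] at this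
  have hBH : (A * X * Cᵀ)ᴴ = C * X * Aᵀ := by
    simp [conjTranspose_mul, hXt, Matrix.mul_assoc]
  have key : gmap A C Q W₂ X - gmap A C Q W₁ X
      = (A * X * Cᵀ) * ((C * X * Cᵀ + W₁)⁻¹ - (C * X * Cᵀ + W₂)⁻¹) * (A * X * Cᵀ)ᴴ := by
    rw [hBH]
    simp only [gmap, Matrix.mul_sub, Matrix.sub_mul, Matrix.mul_assoc]
    abel
  rw [key]
  exact hinv.mul_mul_conjTranspose_same _
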